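/- For m = -2 the solution of θ' + (1+m)cos θ = 0, z' = sin θ, y' = e^z cos θ with θ(0) = z(0) = y(0) = 0 is θ(s) = 2·arctan(tanh(s/2)), z(s) = log(cosh s), y(s) = s; hence the generating curve of the invariant Weingarten surface with κ₁ = -2κ₂ is the graph of z(y) = log(cosh y). -/

import Mathlib

open Real

private lemma lipCos : LipschitzWith 1 Real.cos := by
  apply lipschitzWith_of_nnnorm_deriv_le Real.differentiable_cos
  intro x
  rw [Real.deriv_cos, ← NNReal.coe_le_coe, coe_nnnorm, NNReal.coe_one,
    Real.norm_eq_abs, abs_neg]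
  exact Real.abs_sin_le_one x

private lemma uniqCos (f g : ℝ → ℝ)
    (hf : ∀ s, HasDerivAt f (Real.cos (f s)) s)
    (hg : ∀ s, HasDerivAt g (Real.cos (g s)) s)
    (h0 : f 0 = g 0) : ∀ s, f s = g s := by
  intro s
  have hmem : s ∈ Set.Icc (-(|s| + 1)) (|s| + 1) := by
    constructor <;> [nlinarith [abs_nonneg s, neg_abs_le s]; nlinarith [le_abs_self s]]
  have h0mem : (0 : ℝ) ∈ Set.Ioo (-(|s| + 1)) (|s| + 1) := by
    constructor <;> nlinarith [abs_nonneg s]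
  exact ODE_solution_unique_of_mem_Icc (v := fun _ x => Real.cos x)
    (s := fun _ => Set.univ) (fun _ _ => lipCos.lipschitzOnWith)
    h0mem
    (fun t _ => (hf t).continuousAt.continuousWithinAt)
    (fun t _ => hf t) (fun _ _ => Set.mem_univ _)
    (fun t _ => (hg t).continuousAt.continuousWithinAt)
    (fun t _ => hg t) (fun _ _ => Set.mem_univ _)
    h0 hmem

private lemma hasDerivAt_tanh (x : ℝ) :
    HasDerivAt Real.tanh (1 / Real.cosh x ^ 2) x := by
  have h : HasDerivAt (fun x => Real.sinh x / Real.cosh x)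
      ((Real.cosh x * Real.cosh x - Real.sinh x * Real.sinh x) / Real.cosh x ^ 2) x :=
    (Real.hasDerivAt_sinh x).div (Real.hasDerivAt_cosh x) (Real.cosh_pos x).ne'
  have heq : (Real.cosh x * Real.cosh x - Real.sinh x * Real.sinh x) / Real.cosh x ^ 2
      = 1 / Real.cosh x ^ 2 := by
    rw [show Real.cosh x * Real.cosh x - Real.sinh x * Real.sinh x
        = Real.cosh x ^ 2 - Real.sinh x ^ 2 by ring, Real.cosh_sq_sub_sinh_sq]
  rw [heq] at h
  have hfun : Real.tanh = fun x => Real.sinh x / Real.cosh x :=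
    funext fun y => Real.tanh_eq_sinh_div_cosh y
  rw [hfun]
  exact h

private lemma cos_two_arctan (t : ℝ) :
    Real.cos (2 * Real.arctan t) = (1 - t ^ 2) / (1 + t ^ 2) := by
  have h1 : (0:ℝ) < 1 + t ^ 2 := by positivity
  rw [Real.cos_two_mul, Real.cos_sq_arctan]
  field_simp
  ring

private lemma sin_two_arctan (t : ℝ) :
    Real.sin (2 * Real.arctan t) = 2 * t / (1 + t ^ 2) := by
  have h1 : (0:ℝ) < 1 + t ^ 2 := by positivity
  have hs : Real.sqrt (1 + t ^ 2) ≠ 0 := by positivity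
  have h2 : Real.sqrt (1 + t ^ 2) * Real.sqrt (1 + t ^ 2) = 1 + t ^ 2 :=
    Real.mul_self_sqrt h1.le
  rw [Real.sin_two_mul, Real.sin_arctan, Real.cos_arctan]
  field_simp
  rw [Real.sq_sqrt h1.le]

private lemma one_sub_tanh_sq (x : ℝ) :
    1 - Real.tanh x ^ 2 = 1 / Real.cosh x ^ 2 := by
  have hc := (Real.cosh_pos x).ne'
  rw [Real.tanh_eq_sinh_div_cosh, div_pow]
  field_simp
  exact Real.cosh_sq_sub_sinh_sq x

private lemma one_add_tanh_sq (x : ℝ) :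
    1 + Real.tanh x ^ 2 = (Real.cosh x ^ 2 + Real.sinh x ^ 2) / Real.cosh x ^ 2 := by
  have hc := (Real.cosh_pos x).ne'
  rw [Real.tanh_eq_sinh_div_cosh, div_pow]
  field_simp

private lemma θhat_deriv (s : ℝ) :
    HasDerivAt (fun s => 2 * Real.arctan (Real.tanh (s / 2)))
      (Real.cos (2 * Real.arctan (Real.tanh (s / 2)))) s := by
  have hhalf : HasDerivAt (fun s : ℝ => s / 2) (1 / 2) s := by
    simpa using (hasDerivAt_id s).div_const 2
  have ht : HasDerivAt (fun s : ℝ => Real.tanh (s / 2))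
      ((1 / Real.cosh (s / 2) ^ 2) * (1 / 2)) s :=
    by have := (hasDerivAt_tanh (s / 2)).comp s hhalf; exact this
  have ha : HasDerivAt (fun s : ℝ => Real.arctan (Real.tanh (s / 2)))
      ((1 / (1 + Real.tanh (s / 2) ^ 2)) * ((1 / Real.cosh (s / 2) ^ 2) * (1 / 2))) s :=
    by have := (Real.hasDerivAt_arctan (Real.tanh (s / 2))).comp s ht; exact this
  have := ha.const_mul (2 : ℝ)
  refine this.congr_deriv ?_
  rw [cos_two_arctan, one_sub_tanh_sq, one_add_tanh_sq]
  have hc := (Real.cosh_pos (s / 2)).ne'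
  have hcs : (0:ℝ) < Real.cosh (s / 2) ^ 2 + Real.sinh (s / 2) ^ 2 := by
    nlinarith [Real.cosh_pos (s / 2)]
  field_simp

theorem stmt_17 (θ z y : ℝ → ℝ)
    (hθ : ∀ s, HasDerivAt θ (-(1 + (-2 : ℝ)) * cos (θ s)) s)
    (hz : ∀ s, HasDerivAt z (sin (θ s)) s)
    (hy : ∀ s, HasDerivAt y (exp (z s) * cos (θ s)) s)
    (hθ0 : θ 0 = 0) (hz0 : z 0 = 0) (hy0 : y 0 = 0) :
    (∀ s, θ s = 2 * arctan (tanh (s / 2))) ∧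
    (∀ s, z s = log (cosh s)) ∧
    (∀ s, y s = s) ∧
    (∀ s, z s = log (cosh (y s))) := by
  have hθ' : ∀ s, HasDerivAt θ (Real.cos (θ s)) s := by
    intro s
    have := hθ s
    norm_num at this
    exact this
  have hθeq : ∀ s, θ s = 2 * arctan (tanh (s / 2)) := by
    apply uniqCos θ (fun s => 2 * arctan (tanh (s / 2))) hθ' θhat_deriv
    simp [hθ0]
  -- key trig identities: sin θ = tanh, cos θ = 1 / cosh
  have hsin : ∀ s, Real.sin (θ s) = Real.sinh s / Real.cosh s := by
    intro s
    rw [hθeq s, sin_two_arctan, one_add_tanh_sq, Real.tanh_eq_sinh_div_cosh]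
    have hc := (Real.cosh_pos (s / 2)).ne'
    have hcs : (0:ℝ) < Real.cosh (s / 2) ^ 2 + Real.sinh (s / 2) ^ 2 := by
      nlinarith [Real.cosh_pos (s / 2)]
    have hsinh : Real.sinh s = 2 * Real.sinh (s / 2) * Real.cosh (s / 2) := by
      rw [show s = 2 * (s / 2) by ring, Real.sinh_two_mul]
      ring_nf
    have hcosh : Real.cosh s = Real.cosh (s / 2) ^ 2 + Real.sinh (s / 2) ^ 2 := by
      rw [show s = 2 * (s / 2) by ring, Real.cosh_two_mul]
      ring_nf
    rw [hsinh, hcosh]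
    field_simp
  have hcos : ∀ s, Real.cos (θ s) = 1 / Real.cosh s := by
    intro s
    rw [hθeq s, cos_two_arctan, one_sub_tanh_sq, one_add_tanh_sq]
    have hc := (Real.cosh_pos (s / 2)).ne'
    have hcs : (0:ℝ) < Real.cosh (s / 2) ^ 2 + Real.sinh (s / 2) ^ 2 := by
      nlinarith [Real.cosh_pos (s / 2)]
    have hcosh : Real.cosh s = Real.cosh (s / 2) ^ 2 + Real.sinh (s / 2) ^ 2 := by
      rw [show s = 2 * (s / 2) by ring, Real.cosh_two_mul]
      ring_nf
    rw [hcosh]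
    field_simp
  -- z = log cosh
  have hzhat : ∀ s, HasDerivAt (fun s => Real.log (Real.cosh s))
      (Real.sinh s / Real.cosh s) s := by
    intro s
    exact (Real.hasDerivAt_cosh s).log (Real.cosh_pos s).ne'
  have hzeq : ∀ s, z s = Real.log (Real.cosh s) := by
    intro s
    have hdiff : ∀ x, HasDerivAt (fun s => z s - Real.log (Real.cosh s)) 0 x := by
      intro x
      have := (hz x).sub (hzhat x)
      rwa [hsin x, sub_self] at this
    have hconst : ∀ x w : ℝ, (fun s => z s - Real.log (Real.cosh s)) x
        = (fun s => z s - Real.log (Real.cosh s)) w := by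
      intro x w
      exact is_const_of_deriv_eq_zero (fun u => (hdiff u).differentiableAt)
        (fun u => (hdiff u).deriv) x w
    have := hconst s 0
    simp only [hz0, Real.cosh_zero, Real.log_one] at this
    linarith
  -- y = id
  have hyeq : ∀ s, y s = s := by
    intro s
    have hdiff : ∀ x, HasDerivAt (fun s => y s - s) 0 x := by
      intro x
      have h1 := (hy x).sub (hasDerivAt_id x)
      have : Real.exp (z x) * Real.cos (θ x) = 1 := by
        rw [hzeq x, hcos x, Real.exp_log (Real.cosh_pos x)]
        field_simp
      rwa [this, sub_self] at h1
    have hconst := is_const_of_deriv_eq_zero (f := fun s => y s - s)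
      (fun u => (hdiff u).differentiableAt) (fun u => (hdiff u).deriv) s 0
    simp only [hy0] at hconst
    linarith
  refine ⟨hθeq, hzeq, hyeq, fun s => ?_⟩
  rw [hyeq s, hzeq s]
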